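/- The probabilists' Hermite polynomials satisfy the pointwise bound |H_k(x)| ≤ √(k! · exp(x²/2)) for all real x and all nonnegative integers k. -/

import Mathlib

noncomputable def hermiteEval (k : ℕ) (t : ℝ) : ℝ :=
  Polynomial.aeval t (Polynomial.hermite k)

namespace CramerAux
open Polynomial Real Filter

lemma derivative_hermite_succ (n : ℕ) :
    derivative (hermite (n+1)) = ((n : ℤ[X])+1) * hermite n := by
  induction n with
  | zero => simp [hermite_one]
  | succ n ih =>
    rw [hermite_succ (n+1), derivative_sub, derivative_mul, derivative_X, one_mul, ih,
      derivative_mul, hermite_succ n]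
    have hd : derivative ((n : ℤ[X])+1) = 0 := by
      rw [derivative_add, derivative_natCast, derivative_one, add_zero]
    rw [hd]
    push_cast
    ring

lemma He_zero (x : ℝ) : hermiteEval 0 x = 1 := by
  simp [hermiteEval]

lemma He_one (x : ℝ) : hermiteEval 1 x = x := by
  simp [hermiteEval, hermite_one]

lemma He_succ (n : ℕ) (x : ℝ) :
    hermiteEval (n+2) x = x * hermiteEval (n+1) x - ((n : ℝ)+1) * hermiteEval n x := by
  unfold hermiteEval
  rw [hermite_succ (n+1), derivative_hermite_succ, map_sub, map_mul, map_mul, aeval_X, map_add,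
    map_one, map_natCast]

lemma He_hasDerivAt (n : ℕ) (x : ℝ) :
    HasDerivAt (hermiteEval (n+1)) (((n : ℝ)+1) * hermiteEval n x) x := by
  have h := Polynomial.hasDerivAt_aeval (𝕜 := ℝ) (q := hermite (n+1)) x
  rw [derivative_hermite_succ, map_mul, map_add, map_one, map_natCast] at h
  unfold hermiteEval
  convert h using 1

lemma He_hasDerivAt_zero (x : ℝ) : HasDerivAt (hermiteEval 0) 0 x := by
  have : (hermiteEval 0) = fun _ : ℝ => (1 : ℝ) := funext He_zero
  rw [this]
  exact hasDerivAt_const x 1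

lemma He_neg (n : ℕ) (x : ℝ) : hermiteEval n (-x) = (-1)^n * hermiteEval n x := by
  induction n using Nat.strong_induction_on generalizing x with
  | _ n ih =>
    match n with
    | 0 => simp [He_zero]
    | 1 => simp [He_one]
    | (m+2) =>
      rw [He_succ m (-x), He_succ m x, ih (m+1) (by omega), ih m (by omega)]
      ring

lemma He_odd_zero (j : ℕ) : hermiteEval (2*j+1) 0 = 0 := by
  induction j with
  | zero => simp [He_one]
  | succ j ih =>
    have h : 2*(j+1)+1 = (2*j+1) + 2 := by ring
    rw [h, He_succ (2*j+1) 0, ih]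
    ring

lemma He_even_zero_succ (j : ℕ) :
    hermiteEval (2*(j+1)) 0 = -((2*(j:ℝ)+1)) * hermiteEval (2*j) 0 := by
  have h : 2*(j+1) = (2*j) + 2 := by ring
  rw [h, He_succ (2*j) 0]
  push_cast
  ring

/-- Key double-factorial bound: `(3j+1) * He_{2j}(0)^4 ≤ ((2j)!)^2`. -/
lemma He_even_zero_bound (j : ℕ) :
    (3*(j:ℝ)+1) * (hermiteEval (2*j) 0)^4 ≤ (((2*j).factorial : ℝ))^2 := by
  induction j with
  | zero => simp [He_zero]
  | succ j ih =>
    have h0 := He_even_zero_succ j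
    have hfac : ((2*(j+1)).factorial : ℝ) = (2*(j:ℝ)+2) * (2*(j:ℝ)+1) * ((2*j).factorial : ℝ) := by
      have h1 : 2*(j+1) = (2*j+1) + 1 := by ring
      rw [h1, Nat.factorial_succ]
      have h2 : 2*j+1 = (2*j) + 1 := rfl
      rw [h2, Nat.factorial_succ]
      push_cast
      ring
    rw [h0, hfac]
    push_cast
    have hkey : (3*(j:ℝ)+4) * (2*(j:ℝ)+1)^2 ≤ (3*(j:ℝ)+1) * (2*(j:ℝ)+2)^2 := by
      nlinarith [Nat.cast_nonneg (α := ℝ) j]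
    have m1 : ((3*(j:ℝ)+4) * (2*(j:ℝ)+1)^2) * ((2*(j:ℝ)+1)^2 * (hermiteEval (2*j) 0)^4)
        ≤ ((3*(j:ℝ)+1) * (2*(j:ℝ)+2)^2) * ((2*(j:ℝ)+1)^2 * (hermiteEval (2*j) 0)^4) :=
      mul_le_mul_of_nonneg_right hkey (by positivity)
    have m2 : ((2*(j:ℝ)+2)^2 * (2*(j:ℝ)+1)^2) * ((3*(j:ℝ)+1) * (hermiteEval (2*j) 0)^4)
        ≤ ((2*(j:ℝ)+2)^2 * (2*(j:ℝ)+1)^2) * (((2*j).factorial : ℝ))^2 :=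
      mul_le_mul_of_nonneg_left ih (by positivity)
    nlinarith [m1, m2]


noncomputable section StepDefs

open Real

variable (m : ℕ)

def g (x : ℝ) : ℝ := Real.exp (-(x^2/2))
def H (x : ℝ) : ℝ := hermiteEval (m+2) x
def Hd (x : ℝ) : ℝ := ((m:ℝ)+2) * hermiteEval (m+1) x
def pp (x : ℝ) : ℝ := (H m x)^2 * g x
def vv (x : ℝ) : ℝ := Hd m x - x/2 * H m x
def ss (x : ℝ) : ℝ := 2 * H m x * vv m x * g x
def rr (x : ℝ) : ℝ := (vv m x)^2 * g x
def qq (x : ℝ) : ℝ := (m:ℝ) + 2 + 1/2 - x^2/4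
def GG (x : ℝ) : ℝ := qq m x * pp m x + rr m x
def sg (x : ℝ) : ℝ := Real.sqrt (qq m x)
def KK (x : ℝ) : ℝ := GG m x / sg m x
def aa (x : ℝ) : ℝ := x / (8 * (sg m x)^3)
def bb (x : ℝ) : ℝ := (4 * qq m x + 3*x^2) / (32 * (sg m x)^5)
def cc (x : ℝ) : ℝ := x * (36 * qq m x + 15*x^2) / (128 * (sg m x)^7)
def ZZ (M : ℝ) (x : ℝ) : ℝ := KK m x - aa m x * ss m x + bb m x * pp m x - M * bb m x

variable {m}

lemma g_pos (x : ℝ) : 0 < g x := Real.exp_pos _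

lemma hasDerivAt_g (x : ℝ) : HasDerivAt g (-x * g x) x := by
  have h1 : HasDerivAt (fun y : ℝ => -(y^2/2)) (-x) x := by
    have := ((hasDerivAt_pow 2 x).div_const 2).neg
    refine this.congr_deriv ?_
    symm
    push_cast
    ring
  have := h1.exp
  refine this.congr_deriv ?_
  symm
  unfold g
  ring

lemma hasDerivAt_H (x : ℝ) : HasDerivAt (H m) (Hd m x) x := by
  have h := He_hasDerivAt (m+1) x
  have e : ((m:ℝ)+1+1) * hermiteEval (m+1) x = Hd m x := by
    unfold Hd; push_cast; ring
  rw [show ((m+1 : ℕ) : ℝ) = (m:ℝ)+1 by push_cast; ring] at h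
  rw [e] at h
  exact h

lemma hasDerivAt_Hd (x : ℝ) :
    HasDerivAt (Hd m) (x * Hd m x - ((m:ℝ)+2) * H m x) x := by
  have h := (He_hasDerivAt m x).const_mul ((m:ℝ)+2)
  refine h.congr_deriv ?_
  symm
  unfold Hd H
  rw [He_succ m x]
  ring

lemma hasDerivAt_q (x : ℝ) : HasDerivAt (qq m) (-x/2) x := by
  have h1 : HasDerivAt (fun y : ℝ => y^2/4) (x/2) x := by
    have := (hasDerivAt_pow 2 x).div_const 4
    refine this.congr_deriv ?_
    symm
    push_cast
    ring
  have := (hasDerivAt_const x ((m:ℝ) + 2 + 1/2)).sub h1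
  refine this.congr_deriv ?_
  symm
  ring

lemma hasDerivAt_p (x : ℝ) : HasDerivAt (pp m) (ss m x) x := by
  have h := ((hasDerivAt_H (m := m) x).pow 2).mul (hasDerivAt_g x)
  refine h.congr_deriv ?_
  symm
  simp only [ss, vv, pp, g, Pi.pow_apply]
  push_cast
  ring

lemma hasDerivAt_v (x : ℝ) :
    HasDerivAt (vv m) (x/2 * vv m x - qq m x * H m x) x := by
  have h2 : HasDerivAt (fun y : ℝ => y/2 * H m y) (1/2 * H m x + x/2 * Hd m x) x := by
    have := ((hasDerivAt_id x).div_const 2).mul (hasDerivAt_H (m := m) x)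
    exact this
  have h := (hasDerivAt_Hd (m := m) x).sub h2
  refine h.congr_deriv ?_
  symm
  simp only [vv, qq]
  ring

lemma hasDerivAt_s (x : ℝ) :
    HasDerivAt (ss m) (2 * rr m x - 2 * qq m x * pp m x) x := by
  have h := (((hasDerivAt_H (m := m) x).const_mul 2).mul (hasDerivAt_v (m := m) x)).mul (hasDerivAt_g x)
  refine h.congr_deriv ?_
  symm
  simp only [rr, pp, ss, vv, Pi.mul_apply]
  push_cast
  ring

lemma hasDerivAt_r (x : ℝ) : HasDerivAt (rr m) (-(qq m x) * ss m x) x := by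
  have h := ((hasDerivAt_v (m := m) x).pow 2).mul (hasDerivAt_g x)
  refine h.congr_deriv ?_
  symm
  simp only [rr, ss, vv, Pi.pow_apply]
  push_cast
  ring

lemma hasDerivAt_G (x : ℝ) : HasDerivAt (GG m) (-x/2 * pp m x) x := by
  have h := ((hasDerivAt_q (m := m) x).mul (hasDerivAt_p (m := m) x)).add (hasDerivAt_r (m := m) x)
  refine h.congr_deriv ?_
  symm
  ring

lemma sg_pos {x : ℝ} (hq : 0 < qq m x) : 0 < sg m x := Real.sqrt_pos.2 hq

lemma sg_sq {x : ℝ} (hq : 0 < qq m x) : (sg m x)^2 = qq m x := Real.sq_sqrt hq.le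

lemma hasDerivAt_sg {x : ℝ} (hq : 0 < qq m x) :
    HasDerivAt (sg m) (-x / (4 * sg m x)) x := by
  have h := (Real.hasDerivAt_sqrt (ne_of_gt hq)).comp x (hasDerivAt_q (m := m) x)
  have hs := sg_pos hq
  refine h.congr_deriv ?_
  symm
  simp only [sg]
  rw [div_mul_eq_mul_div, one_mul, div_div]
  congr 1
  ring

lemma hasDerivAt_K {x : ℝ} (hq : 0 < qq m x) :
    HasDerivAt (KK m) (aa m x * (2 * rr m x - 2 * qq m x * pp m x)) x := by
  have hs := sg_pos hq
  have h := (hasDerivAt_G (m := m) x).div (hasDerivAt_sg (m := m) hq) (ne_of_gt hs)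
  refine h.congr_deriv ?_
  symm
  simp only [aa, GG]
  rw [show qq m x = (sg m x)^2 from (sg_sq hq).symm]
  field_simp
  ring

lemma hasDerivAt_a {x : ℝ} (hq : 0 < qq m x) :
    HasDerivAt (aa m) (bb m x) x := by
  have hs := sg_pos hq
  have hden : HasDerivAt (fun y => 8 * (sg m y)^3) (8 * (3 * (sg m x)^2 * (-x / (4 * sg m x)))) x :=
    (((hasDerivAt_sg (m := m) hq).pow 3).const_mul 8).congr_deriv (by push_cast; ring)
  have h := (hasDerivAt_id x).div hden (by positivity)
  refine h.congr_deriv ?_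
  symm
  simp only [bb, id]
  rw [show qq m x = (sg m x)^2 from (sg_sq hq).symm]
  field_simp
  ring

lemma hasDerivAt_b {x : ℝ} (hq : 0 < qq m x) :
    HasDerivAt (bb m) (cc m x) x := by
  have hs := sg_pos hq
  have hnum : HasDerivAt (fun y => 4 * qq m y + 3*y^2) (4*x) x := by
    have := ((hasDerivAt_q (m := m) x).const_mul 4).add ((hasDerivAt_pow 2 x).const_mul 3)
    refine this.congr_deriv ?_
    symm
    push_cast
    ring
  have hden : HasDerivAt (fun y => 32 * (sg m y)^5) (32 * (5 * (sg m x)^4 * (-x / (4 * sg m x)))) x :=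
    (((hasDerivAt_sg (m := m) hq).pow 5).const_mul 32).congr_deriv (by push_cast; ring)
  have h := hnum.div hden (by positivity)
  refine h.congr_deriv ?_
  symm
  simp only [cc]
  rw [show qq m x = (sg m x)^2 from (sg_sq hq).symm]
  field_simp
  ring

lemma hasDerivAt_Z {x : ℝ} (hq : 0 < qq m x) (M : ℝ) :
    HasDerivAt (ZZ m M) (cc m x * (pp m x - M)) x := by
  have h := (((hasDerivAt_K (m := m) hq).sub ((hasDerivAt_a (m := m) hq).mul (hasDerivAt_s (m := m) x))).add
    ((hasDerivAt_b (m := m) hq).mul (hasDerivAt_p (m := m) x))).sub ((hasDerivAt_b (m := m) hq).const_mul M)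
  refine h.congr_deriv ?_
  symm
  ring

end StepDefs


section MainProof

open Real Filter Polynomial Topology

lemma pp_nonneg (m : ℕ) (x : ℝ) : 0 ≤ pp m x := by
  unfold pp g
  positivity

lemma pp_even (m : ℕ) (x : ℝ) : pp m (-x) = pp m x := by
  unfold pp H g
  rw [He_neg, mul_pow, ← pow_mul, mul_comm (m+2) 2, pow_mul, neg_one_sq, one_pow, one_mul,
    neg_sq]

lemma continuous_pp (m : ℕ) : Continuous (pp m) := by
  unfold pp H g
  have h1 : Continuous fun x : ℝ => hermiteEval (m+2) x := by
    unfold hermiteEval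
    exact Polynomial.continuous_aeval _
  have h2 : Continuous fun x : ℝ => Real.exp (-(x^2/2)) :=
    Real.continuous_exp.comp (by continuity)
  exact (h1.pow 2).mul h2

lemma tendsto_pp_atTop (m : ℕ) : Tendsto (pp m) atTop (𝓝 0) := by
  set Q : Polynomial ℝ := ((hermite (m+2)).map (Int.castRingHom ℝ))^2 with hQ
  have hQeval : ∀ x : ℝ, (H m x)^2 = Q.eval x := by
    intro x
    unfold H hermiteEval
    rw [hQ, eval_pow, aeval_def, eval₂_eq_eval_map]
    rfl
  have hbound : ∀ x : ℝ, pp m x ≤ |Q.eval x / Real.exp x| * Real.exp (1/2 : ℝ) := by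
    intro x
    unfold pp g
    rw [hQeval x]
    have hid : Q.eval x * Real.exp (-(x^2/2)) = (Q.eval x / Real.exp x) * Real.exp (x - x^2/2) := by
      rw [div_mul_eq_mul_div, eq_div_iff (Real.exp_ne_zero x), mul_assoc, ← Real.exp_add]
      congr 1
      ring
    rw [hid]
    have h1 : Q.eval x / Real.exp x ≤ |Q.eval x / Real.exp x| := le_abs_self _
    have h2 : Real.exp (x - x^2/2) ≤ Real.exp (1/2 : ℝ) := by
      apply Real.exp_le_exp.2
      nlinarith [sq_nonneg (x - 1)]
    have h3 : (0:ℝ) < Real.exp (x - x^2/2) := Real.exp_pos _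
    calc Q.eval x / Real.exp x * Real.exp (x - x^2/2)
        ≤ |Q.eval x / Real.exp x| * Real.exp (x - x^2/2) := by
          apply mul_le_mul_of_nonneg_right h1 h3.le
      _ ≤ |Q.eval x / Real.exp x| * Real.exp (1/2 : ℝ) := by
          apply mul_le_mul_of_nonneg_left h2 (abs_nonneg _)
  have hlim : Tendsto (fun x => |Q.eval x / Real.exp x| * Real.exp (1/2 : ℝ)) atTop (𝓝 0) := by
    have := (Q.tendsto_div_exp_atTop).abs
    rw [abs_zero] at this
    simpa using this.mul_const (Real.exp (1/2 : ℝ))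
  exact squeeze_zero (fun x => pp_nonneg m x) hbound hlim

lemma tendsto_pp_atBot (m : ℕ) : Tendsto (pp m) atBot (𝓝 0) := by
  have h : (pp m) ∘ (fun x : ℝ => -x) = pp m := by
    funext x
    simp [Function.comp, pp_even]
  have := (tendsto_pp_atTop m).comp tendsto_neg_atBot_atTop
  rwa [h] at this

lemma exists_max (m : ℕ) : ∃ x : ℝ, 0 ≤ x ∧ ∀ y, pp m y ≤ pp m x := by
  -- find a point where pp is positive
  have hne : (hermite (m+2)).map (Int.castRingHom ℝ) ≠ 0 :=
    ((hermite_monic (m+2)).map _).ne_zero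
  obtain ⟨x₀, hx₀⟩ : ∃ x₀ : ℝ, ¬ IsRoot ((hermite (m+2)).map (Int.castRingHom ℝ)) x₀ := by
    by_contra hcon
    push_neg at hcon
    have : Set.Infinite {x : ℝ | IsRoot ((hermite (m+2)).map (Int.castRingHom ℝ)) x} := by
      exact Set.infinite_of_injective_forall_mem (f := fun x : ℝ => x)
        (fun a b h => h) (fun x => hcon x)
    exact hne (eq_zero_of_infinite_isRoot _ this)
  have hx0pos : 0 < pp m x₀ := by
    unfold pp
    apply mul_pos _ (g_pos x₀)
    have hHne : H m x₀ ≠ 0 := by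
      unfold H hermiteEval
      rw [aeval_def, eval₂_eq_eval_map]
      exact hx₀
    positivity
  have hcocompact : Tendsto (pp m) (cocompact ℝ) (𝓝 0) := by
    rw [cocompact_eq_atBot_atTop]
    rw [tendsto_sup]
    exact ⟨tendsto_pp_atBot m, tendsto_pp_atTop m⟩
  have hev : ∀ᶠ x in cocompact ℝ, pp m x ≤ pp m x₀ :=
    hcocompact.eventually_le_const hx0pos
  obtain ⟨x₁, hx₁⟩ := (continuous_pp m).exists_forall_ge' x₀ hev
  refine ⟨|x₁|, abs_nonneg _, fun y => ?_⟩
  have : pp m |x₁| = pp m x₁ := by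
    rcases abs_choice x₁ with h | h
    · rw [h]
    · rw [h, pp_even]
  rw [this]
  exact hx₁ y

lemma cc_nonneg (m : ℕ) {x : ℝ} (hx : 0 ≤ x) (hq : 0 < qq m x) : 0 ≤ cc m x := by
  unfold cc
  have hs := sg_pos (m := m) hq
  apply div_nonneg _ (by positivity)
  have : 0 ≤ 36 * qq m x + 15*x^2 := by positivity
  positivity

lemma bb_nonneg (m : ℕ) {x : ℝ} (hq : 0 < qq m x) : 0 ≤ bb m x := by
  unfold bb
  have hs := sg_pos (m := m) hq
  apply div_nonneg _ (by positivity)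
  positivity

lemma GG_zero_eq (m : ℕ) : GG m 0 = ((m:ℝ)+2+1/2) * (hermiteEval (m+2) 0)^2
    + ((m:ℝ)+2)^2 * (hermiteEval (m+1) 0)^2 := by
  unfold GG qq pp rr vv Hd H g
  norm_num
  ring

lemma qq_zero_eq (m : ℕ) : qq m 0 = (m:ℝ)+2+1/2 := by
  unfold qq
  norm_num

set_option maxHeartbeats 2000000 in
/-- The inequality at `x = 0`: `GG m 0 ^ 2 ≤ (3/4) * qq m 0 * ((m+2)!)^2`. -/
lemma GG_zero_bound (m : ℕ) :
    (GG m 0)^2 ≤ (3/4) * qq m 0 * (((m+2).factorial : ℝ))^2 := by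
  rw [GG_zero_eq, qq_zero_eq]
  rcases Nat.even_or_odd' m with ⟨j, rfl | rfl⟩
  · -- m = 2j even
    have hodd : hermiteEval (2*j+1) 0 = 0 := He_odd_zero j
    have hA := He_even_zero_bound (j+1)
    rw [show 2*(j+1) = 2*j+2 from by ring] at hA
    push_cast at hA
    rw [hodd]
    have hfac : (0:ℝ) ≤ (((2*j+2).factorial : ℝ))^2 := by positivity
    set A := hermiteEval (2*j+2) 0 with hAdef
    have hA4 : (0:ℝ) ≤ A^4 := by positivity
    push_cast
    nlinarith [mul_le_mul_of_nonneg_left hA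
      (show (0:ℝ) ≤ (3/4) * (2*(j:ℝ)+2+1/2) by positivity), sq_nonneg A, hA4,
      Nat.cast_nonneg (α := ℝ) j]
  · -- m = 2j+1 odd
    have hodd : hermiteEval (2*j+1+2) 0 = 0 := by
      have := He_odd_zero (j+1)
      rwa [show 2*(j+1)+1 = 2*j+1+2 from by ring] at this
    have hA := He_even_zero_bound (j+1)
    rw [show 2*(j+1) = 2*j+1+1 from by ring] at hA
    push_cast at hA
    rw [hodd]
    have hfac : (((2*j+1+2).factorial : ℝ)) = (2*(j:ℝ)+3) * (((2*j+1+1).factorial : ℝ)) := by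
      rw [show 2*j+1+2 = (2*j+1+1)+1 from rfl, Nat.factorial_succ]
      push_cast
      ring
    rw [hfac]
    set B := hermiteEval (2*j+1+1) 0 with hBdef
    have hB4 : (0:ℝ) ≤ B^4 := by positivity
    push_cast
    have hcoef : (2*(j:ℝ)+3)^2 ≤ (3/4)*(2*(j:ℝ)+1+2+1/2)*(3*(j:ℝ)+4) := by
      nlinarith [Nat.cast_nonneg (α := ℝ) j]
    have k2 := mul_le_mul_of_nonneg_right hcoef
      (show (0:ℝ) ≤ (2*(j:ℝ)+3)^2 * B^4 by positivity)
    have k1 := mul_le_mul_of_nonneg_left hA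
      (show (0:ℝ) ≤ (3/4) * (2*(j:ℝ)+1+2+1/2) * (2*(j:ℝ)+3)^2 by positivity)
    nlinarith [k1, k2]

set_option maxHeartbeats 2000000 in
lemma key_step (m : ℕ) (IH : ∀ x, (hermiteEval m x)^2 * g x ≤ (m.factorial : ℝ)) :
    ∀ x, (hermiteEval (m+2) x)^2 * g x ≤ (((m+2).factorial : ℝ)) := by
  obtain ⟨c, hc0, hcmax⟩ := exists_max m
  have hFpos : (0:ℝ) < ((m+2).factorial : ℝ) := by positivity
  have hfac : (((m+2).factorial : ℝ)) = ((m:ℝ)+2)*((m:ℝ)+1)*(m.factorial : ℝ) := by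
    rw [show m+2 = (m+1)+1 from rfl, Nat.factorial_succ, Nat.factorial_succ]
    push_cast
    ring
  -- derivative vanishes at the max
  have hloc : IsLocalMax (pp m) c := Filter.Eventually.of_forall fun y => hcmax y
  have hs0 : ss m c = 0 := hloc.hasDerivAt_eq_zero (hasDerivAt_p c)
  have hgoal : pp m c ≤ ((m+2).factorial : ℝ) := by
    by_cases hqc : qq m c ≤ 3/4
    · -- Case A : turning region, use the recurrence and the induction hypothesis
      by_cases hH0 : H m c = 0
      · unfold pp
        rw [hH0]
        simpa using hFpos.le
      · have hgc := g_pos c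
        have hv0 : vv m c = 0 := by
          unfold ss at hs0
          rcases mul_eq_zero.mp hs0 with h | h
          · rcases mul_eq_zero.mp h with h2 | h2
            · rcases mul_eq_zero.mp h2 with h3 | h3
              · norm_num at h3
              · exact absurd h3 hH0
            · exact h2
          · exact absurd h hgc.ne'
        have hrel1 : ((m:ℝ)+2) * hermiteEval (m+1) c = c/2 * hermiteEval (m+2) c := by
          have h := hv0
          unfold vv Hd H at h
          linarith
        have hHs := He_succ m c
        have hrel2 : 2*((m:ℝ)+2)*((m:ℝ)+1) * hermiteEval m c
            = (c^2 - 2*((m:ℝ)+2)) * hermiteEval (m+2) c := by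
          linear_combination (2*((m:ℝ)+2)) * hHs + (2*c) * hrel1
        have hIH := IH c
        have ht : c^2 ≥ 4*((m:ℝ)+2) - 1 := by
          unfold qq at hqc
          linarith
        -- squared relation multiplied by g c
        have hsq : (2*((m:ℝ)+2)*((m:ℝ)+1))^2 * ((hermiteEval m c)^2 * g c)
            = (c^2 - 2*((m:ℝ)+2))^2 * pp m c := by
          unfold pp H
          linear_combination (g c * (2*((m:ℝ)+2)*((m:ℝ)+1) * hermiteEval m c
            + (c^2 - 2*((m:ℝ)+2)) * hermiteEval (m+2) c)) * hrel2
        have hppn := pp_nonneg m c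
        have hgsq : (2*((m:ℝ)+2) - 1)^2 ≤ (c^2 - 2*((m:ℝ)+2))^2 := by
          nlinarith [Nat.cast_nonneg (α := ℝ) m]
        have hstep1 : (2*((m:ℝ)+2) - 1)^2 * pp m c ≤ (c^2 - 2*((m:ℝ)+2))^2 * pp m c :=
          mul_le_mul_of_nonneg_right hgsq hppn
        have hstep2 : (2*((m:ℝ)+2)*((m:ℝ)+1))^2 * ((hermiteEval m c)^2 * g c)
            ≤ (2*((m:ℝ)+2)*((m:ℝ)+1))^2 * (m.factorial : ℝ) :=
          mul_le_mul_of_nonneg_left hIH (by positivity)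
        -- conclude
        rw [hfac]
        nlinarith [hstep1, hstep2, hsq, hppn, Nat.cast_nonneg (α := ℝ) m,
          Nat.cast_nonneg (α := ℝ) m.factorial]
    · -- Case B : energy argument
      push_neg at hqc
      set M := pp m c with hM
      have hqpos : ∀ y ∈ Set.Icc (0:ℝ) c, 3/4 < qq m y := by
        intro y hy
        have h1 : y^2 ≤ c^2 := by
          have := hy.1
          have := hy.2
          nlinarith
        have : qq m c ≤ qq m y := by
          unfold qq
          linarith
        linarith
      have hanti : AntitoneOn (ZZ m M) (Set.Icc 0 c) := by
        apply antitoneOn_of_deriv_nonpos (convex_Icc 0 c)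
        · intro y hy
          have hq := lt_trans (show (0:ℝ) < 3/4 by norm_num) (hqpos y hy)
          exact (hasDerivAt_Z (m := m) hq M).continuousAt.continuousWithinAt
        · intro y hy
          rw [interior_Icc] at hy
          have hq := lt_trans (show (0:ℝ) < 3/4 by norm_num)
            (hqpos y (Set.mem_Icc.mpr ⟨hy.1.le, hy.2.le⟩))
          exact (hasDerivAt_Z (m := m) hq M).differentiableAt.differentiableWithinAt
        · intro y hy
          rw [interior_Icc] at hy
          have hq := lt_trans (show (0:ℝ) < 3/4 by norm_num)
            (hqpos y (Set.mem_Icc.mpr ⟨hy.1.le, hy.2.le⟩))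
          rw [(hasDerivAt_Z (m := m) hq M).deriv]
          have h1 : 0 ≤ cc m y := cc_nonneg m hy.1.le hq
          have h2 : pp m y - M ≤ 0 := by
            have := hcmax y
            rw [hM]
            linarith
          exact mul_nonpos_of_nonneg_of_nonpos h1 h2
      have hqc' : 0 < qq m c := lt_trans (by norm_num) hqc
      have hq0' : 0 < qq m 0 := by
        rw [qq_zero_eq]
        positivity
      have hsgc := sg_pos (m := m) hqc'
      have hsg0 := sg_pos (m := m) hq0'
      have hZc : ZZ m M c = KK m c := by
        unfold ZZ
        rw [hs0]
        ring
      have hZ0 : ZZ m M 0 ≤ KK m 0 := by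
        unfold ZZ
        have ha0 : aa m 0 = 0 := by
          unfold aa
          exact zero_div _
        rw [ha0]
        have hb0 : 0 ≤ bb m 0 := bb_nonneg m hq0'
        have hp0 : pp m 0 ≤ M := hcmax 0
        nlinarith [mul_le_mul_of_nonneg_left hp0 hb0]
      have hmono : ZZ m M c ≤ ZZ m M 0 :=
        hanti (Set.mem_Icc.mpr ⟨le_refl 0, hc0⟩) (Set.mem_Icc.mpr ⟨hc0, le_refl c⟩) hc0
      have hMnn : 0 ≤ M := pp_nonneg m c
      have h1 : sg m c * M ≤ KK m c := by
        unfold KK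
        rw [le_div_iff₀ hsgc]
        have hrr : 0 ≤ rr m c := by
          unfold rr g
          positivity
        have hs2 : sg m c * M * sg m c = qq m c * M := by
          have := sg_sq (m := m) hqc'
          nlinarith [this]
        rw [hs2]
        unfold GG
        rw [hM]
        linarith
      have h2 : sg m c * M ≤ GG m 0 / sg m 0 := by
        have : KK m 0 = GG m 0 / sg m 0 := rfl
        linarith [h1, hmono, hZc ▸ hmono]
      -- square both sides
      have h3 : (sg m c * M)^2 ≤ (GG m 0 / sg m 0)^2 := by
        apply pow_le_pow_left₀ (by positivity) h2
      have h4 : qq m c * M^2 ≤ (GG m 0)^2 / qq m 0 := by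
        have e1 : (sg m c * M)^2 = qq m c * M^2 := by
          rw [mul_pow, sg_sq (m := m) hqc']
        have e2 : (GG m 0 / sg m 0)^2 = (GG m 0)^2 / qq m 0 := by
          rw [div_pow, sg_sq (m := m) hq0']
        rw [e1, e2] at h3
        exact h3
      have h5 : (GG m 0)^2 / qq m 0 ≤ (3/4) * (((m+2).factorial : ℝ))^2 := by
        rw [div_le_iff₀ hq0']
        calc (GG m 0)^2 ≤ (3/4) * qq m 0 * (((m+2).factorial : ℝ))^2 := GG_zero_bound m
          _ = (3/4) * (((m+2).factorial : ℝ))^2 * qq m 0 := by ring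
      -- combine: qq m c * M^2 ≤ (3/4) F^2 with qq m c > 3/4
      have hMM : M^2 ≤ (((m+2).factorial : ℝ))^2 := by
        nlinarith [h4, h5, mul_nonneg (sub_nonneg.2 hqc.le) (sq_nonneg M)]
      nlinarith [hMM, hMnn, hFpos]
  intro x
  exact le_trans (hcmax x) hgoal

theorem key (n : ℕ) : ∀ x, (hermiteEval n x)^2 * g x ≤ (n.factorial : ℝ) := by
  induction n using Nat.strong_induction_on with
  | _ n ih =>
    match n with
    | 0 =>
      intro x
      rw [He_zero]
      simp only [one_pow, one_mul, Nat.factorial_zero, Nat.cast_one]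
      unfold g
      have h := Real.exp_le_exp.2 (show -(x^2/2) ≤ 0 by nlinarith [sq_nonneg x])
      simpa using h
    | 1 =>
      intro x
      rw [He_one]
      unfold g
      simp only [Nat.factorial_one, Nat.cast_one]
      have h1 : Real.exp (x^2/4) ≥ 1 + x^2/4 := by
        have := Real.add_one_le_exp (x^2/4)
        linarith
      have h2 : x^2 ≤ Real.exp (x^2/2) := by
        have he : Real.exp (x^2/2) = (Real.exp (x^2/4))^2 := by
          rw [show (Real.exp (x^2/4))^2 = Real.exp (x^2/4) * Real.exp (x^2/4) from sq _,
            ← Real.exp_add]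
          congr 1
          ring
        rw [he]
        nlinarith [sq_nonneg (1 - x^2/4), Real.exp_pos (x^2/4)]
      have h3 : (0:ℝ) < Real.exp (-(x^2/2)) := Real.exp_pos _
      have h4 := mul_le_mul_of_nonneg_right h2 h3.le
      rwa [← Real.exp_add, add_neg_cancel, Real.exp_zero] at h4
    | (m+2) => exact key_step m (ih m (by omega))

end MainProof

end CramerAux

theorem hermite_cramer_bound (k : ℕ) (x : ℝ) :
    |hermiteEval k x| ≤ Real.sqrt ((k.factorial : ℝ) * Real.exp (x ^ 2 / 2)) := by
  have h := CramerAux.key k x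
  have h2 : (hermiteEval k x)^2 ≤ (k.factorial : ℝ) * Real.exp (x ^ 2 / 2) := by
    have hm := mul_le_mul_of_nonneg_right h (Real.exp_pos (x^2/2)).le
    rw [mul_assoc] at hm
    unfold CramerAux.g at hm
    rw [← Real.exp_add] at hm
    have he : -(x^2/2) + x^2/2 = 0 := by ring
    rw [he, Real.exp_zero, mul_one] at hm
    exact hm
  calc |hermiteEval k x| = Real.sqrt ((hermiteEval k x)^2) := (Real.sqrt_sq_eq_abs _).symm
    _ ≤ _ := Real.sqrt_le_sqrt h2
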